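/- Let ξ(1),...,ξ(n) be a martingale difference sequence with each ξ(i) ∈ L^p for p ≥ 2, and let b(1),...,b(n) be real (deterministic) numbers with Σ_{i=1}^n b(i)^2 = 1. Then |Σ_{i=1}^n b(i)ξ(i)|_p ≤ (p-1) · sup_i |ξ(i)|_p. -/

import Mathlib

open MeasureTheory Finset

namespace RioAux
open Real

/-- max trick : `a^q * b^r ≤ a^(q+r) + b^(q+r)` for nonneg. -/
lemma young_max {q r a b : ℝ} (hq : 0 ≤ q) (hr : 0 ≤ r) (hqr : q + r ≠ 0)
    (ha : 0 ≤ a) (hb : 0 ≤ b) : a ^ q * b ^ r ≤ a ^ (q + r) + b ^ (q + r) := by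
  set m := max a b with hm
  have hmn : 0 ≤ m := le_trans ha (le_max_left _ _)
  have h1 : a ^ q * b ^ r ≤ m ^ q * m ^ r :=
    mul_le_mul (Real.rpow_le_rpow ha (le_max_left _ _) hq)
      (Real.rpow_le_rpow hb (le_max_right _ _) hr) (Real.rpow_nonneg hb r)
      (Real.rpow_nonneg hmn q)
  have h2 : m ^ q * m ^ r = m ^ (q + r) := (Real.rpow_add' hmn hqr).symm
  have h3 : m ^ (q + r) ≤ a ^ (q + r) + b ^ (q + r) := by
    rcases max_choice a b with h | h <;> rw [hm, h]
    · exact le_add_of_nonneg_right (Real.rpow_nonneg hb _)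
    · exact le_add_of_nonneg_left (Real.rpow_nonneg ha _)
  calc a ^ q * b ^ r ≤ m ^ q * m ^ r := h1
    _ = m ^ (q + r) := h2
    _ ≤ _ := h3

lemma add_rpow_le {p a b : ℝ} (hp : 0 ≤ p) (ha : 0 ≤ a) (hb : 0 ≤ b) :
    (a + b) ^ p ≤ 2 ^ p * (a ^ p + b ^ p) := by
  have hmn : 0 ≤ max a b := le_trans ha (le_max_left _ _)
  have h1 : a + b ≤ 2 * max a b := by
    have := le_max_left a b; have := le_max_right a b; linarith
  calc (a + b) ^ p ≤ (2 * max a b) ^ p :=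
        Real.rpow_le_rpow (by linarith) h1 hp
    _ = 2 ^ p * (max a b) ^ p := Real.mul_rpow (by norm_num) hmn
    _ ≤ 2 ^ p * (a ^ p + b ^ p) := by
        refine mul_le_mul_of_nonneg_left ?_ (Real.rpow_nonneg (by norm_num) p)
        rcases max_choice a b with h | h <;> rw [h]
        · exact le_add_of_nonneg_right (Real.rpow_nonneg hb _)
        · exact le_add_of_nonneg_left (Real.rpow_nonneg ha _)

/-- `|x * |x|^(p-2)| = |x|^(p-1)` for `p ≥ 2`. -/
lemma abs_mul_abs_rpow {p : ℝ} (hp : 2 ≤ p) (x : ℝ) :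
    |x * |x| ^ (p - 2)| = |x| ^ (p - 1) := by
  rcases eq_or_ne x 0 with rfl | hx
  · rw [abs_zero, Real.zero_rpow (by linarith : p - 1 ≠ 0)]
    simp
  · rw [abs_mul, abs_of_nonneg (Real.rpow_nonneg (abs_nonneg x) _)]
    have h1 : |x| * |x| ^ (p - 2) = |x| ^ (1:ℝ) * |x| ^ (p - 2) := by
      rw [Real.rpow_one]
    rw [h1, ← Real.rpow_add (abs_pos.2 hx)]
    congr 1; ring


lemma hasDerivAt_abs_rpow {p : ℝ} (hp : 2 ≤ p) (x : ℝ) :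
    HasDerivAt (fun y : ℝ => |y| ^ p) (p * (x * |x| ^ (p - 2))) x := by
  rcases lt_trichotomy x 0 with hx | rfl | hx
  · have hx' : (0:ℝ) < -x := by linarith
    have h0 : HasDerivAt (fun y : ℝ => (-y) ^ p) (p * (-x) ^ (p - 1) * (-1)) x :=
      (Real.hasDerivAt_rpow_const (Or.inl hx'.ne')).comp x (hasDerivAt_neg x)
    have h2 : (fun y : ℝ => (-y) ^ p) =ᶠ[nhds x] fun y => |y| ^ p := by
      filter_upwards [Iio_mem_nhds hx] with y hy
      rw [abs_of_neg hy]
    have h3 := h0.congr_of_eventuallyEq h2.symm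
    refine h3.congr_deriv ?_
    rw [abs_of_neg hx]
    have h4 : (-x) ^ (p - 1) = (-x) ^ (1:ℝ) * (-x) ^ (p - 2) := by
      rw [← Real.rpow_add hx']; congr 1; ring
    rw [h4, Real.rpow_one]; try ring
  · -- x = 0
    rw [hasDerivAt_iff_tendsto_slope]
    have hb : ∀ y : ℝ, y ≠ 0 → ‖slope (fun y : ℝ => |y| ^ p) 0 y‖ = |y| ^ (p - 1) := by
      intro y hy
      rw [slope_def_field]
      have : |(0:ℝ)| ^ p = 0 := by
        rw [abs_zero, Real.zero_rpow (by linarith : p ≠ 0)]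
      rw [this, sub_zero, sub_zero, div_eq_mul_inv, norm_mul, norm_inv,
        Real.norm_eq_abs, Real.norm_eq_abs, abs_of_nonneg (Real.rpow_nonneg (abs_nonneg y) p)]
      rw [← Real.rpow_neg_one |y|, ← Real.rpow_add (abs_pos.2 hy)]
      congr 1 <;> ring
    have ht : Filter.Tendsto (fun y : ℝ => |y| ^ (p - 1)) (nhds 0) (nhds 0) := by
      have hc : Continuous fun y : ℝ => |y| ^ (p - 1) :=
        continuous_abs.rpow_const (fun y => Or.inr (by linarith))
      have := hc.tendsto 0
      simpa [Real.zero_rpow (by linarith : p - 1 ≠ 0)] using this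
    have hval : p * ((0:ℝ) * |(0:ℝ)| ^ (p - 2)) = 0 := by ring
    rw [hval]
    apply squeeze_zero_norm'
    · filter_upwards [self_mem_nhdsWithin] with y hy
      exact le_of_eq (hb y hy)
    · exact ht.mono_left nhdsWithin_le_nhds
  · have h0 : HasDerivAt (fun y : ℝ => y ^ p) (p * x ^ (p - 1)) x :=
      Real.hasDerivAt_rpow_const (Or.inl hx.ne')
    have h2 : (fun y : ℝ => y ^ p) =ᶠ[nhds x] fun y => |y| ^ p := by
      filter_upwards [Ioi_mem_nhds hx] with y hy
      rw [abs_of_pos hy]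
    have h3 := h0.congr_of_eventuallyEq h2.symm
    refine h3.congr_deriv ?_
    rw [abs_of_pos hx]
    have h4 : x ^ (p - 1) = x ^ (1:ℝ) * x ^ (p - 2) := by
      rw [← Real.rpow_add hx]; congr 1; ring
    rw [h4, Real.rpow_one]; try ring

lemma hasDerivAt_chi {p : ℝ} (hp : 2 ≤ p) (x : ℝ) :
    HasDerivAt (fun y : ℝ => y * |y| ^ (p - 2)) ((p - 1) * |x| ^ (p - 2)) x := by
  rcases lt_trichotomy x 0 with hx | rfl | hx
  · have hx' : (0:ℝ) < -x := by linarith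
    have h0 : HasDerivAt (fun y : ℝ => -((-y) ^ (p - 1)))
        (-((p - 1) * (-x) ^ (p - 1 - 1) * (-1))) x :=
      (((Real.hasDerivAt_rpow_const (p := p - 1) (Or.inl hx'.ne')).comp x
        (hasDerivAt_neg x))).neg
    have h2 : (fun y : ℝ => -((-y) ^ (p - 1))) =ᶠ[nhds x] fun y => y * |y| ^ (p - 2) := by
      filter_upwards [Iio_mem_nhds hx] with y hy
      have hy' : y < 0 := hy
      rw [abs_of_neg hy']
      have h4 : (-y) ^ (p - 1) = (-y) ^ (1:ℝ) * (-y) ^ (p - 2) := by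
        rw [← Real.rpow_add (by linarith : (0:ℝ) < -y)]; congr 1; ring
      rw [h4, Real.rpow_one]; try ring
    have h3 := h0.congr_of_eventuallyEq h2.symm
    refine h3.congr_deriv ?_
    rw [abs_of_neg hx]
    have h5 : p - 1 - 1 = p - 2 := by ring
    rw [h5]; ring
  · -- x = 0
    rcases eq_or_lt_of_le hp with hp2 | hp2
    · -- p = 2
      have h2 : (fun y : ℝ => y * |y| ^ (p - 2)) = fun y : ℝ => y := by
        funext y; rw [← hp2]; norm_num
      rw [h2, ← hp2]
      norm_num
      exact hasDerivAt_id 0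
    · -- p > 2
      rw [hasDerivAt_iff_tendsto_slope]
      have hval : (p - 1) * |(0:ℝ)| ^ (p - 2) = 0 := by
        rw [abs_zero, Real.zero_rpow (by linarith : p - 2 ≠ 0)]; ring
      rw [hval]
      have hb : ∀ y : ℝ, y ≠ 0 → ‖slope (fun y : ℝ => y * |y| ^ (p - 2)) 0 y‖
          = |y| ^ (p - 2) := by
        intro y hy
        rw [slope_def_field]
        have h0 : (0:ℝ) * |(0:ℝ)| ^ (p - 2) = 0 := by ring
        rw [h0, sub_zero, sub_zero, mul_comm, mul_div_assoc, div_self hy, mul_one,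
          Real.norm_eq_abs, abs_of_nonneg (Real.rpow_nonneg (abs_nonneg y) _)]
      have ht : Filter.Tendsto (fun y : ℝ => |y| ^ (p - 2)) (nhds 0) (nhds 0) := by
        have hc : Continuous fun y : ℝ => |y| ^ (p - 2) :=
          continuous_abs.rpow_const (fun y => Or.inr (by linarith))
        have := hc.tendsto 0
        simpa [Real.zero_rpow (by linarith : p - 2 ≠ 0)] using this
      apply squeeze_zero_norm'
      · filter_upwards [self_mem_nhdsWithin] with y hy
        exact le_of_eq (hb y hy)
      · exact ht.mono_left nhdsWithin_le_nhds
  · have h0 : HasDerivAt (fun y : ℝ => y ^ (p - 1)) ((p - 1) * x ^ (p - 2)) x := by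
      have := Real.hasDerivAt_rpow_const (p := p - 1) (Or.inl hx.ne')
      convert this using 2
      ring
    have h2 : (fun y : ℝ => y ^ (p - 1)) =ᶠ[nhds x] fun y => y * |y| ^ (p - 2) := by
      filter_upwards [Ioi_mem_nhds hx] with y hy
      rw [abs_of_pos hy]
      have h4 : y ^ (p - 1) = y ^ (1:ℝ) * y ^ (p - 2) := by
        rw [← Real.rpow_add hy]; congr 1; ring
      rw [h4, Real.rpow_one]
    have h3 := h0.congr_of_eventuallyEq h2.symm
    refine h3.congr_deriv ?_
    rw [abs_of_pos hx]


section Deriv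

variable {Ω : Type*} {m0 : MeasurableSpace Ω} {μ : MeasureTheory.Measure Ω}
variable {p : ℝ} {X Y : Ω → ℝ}

/-- continuity of `x ↦ x * |x|^(p-2)` -/
lemma cont_chi (hp : 2 ≤ p) : Continuous fun x : ℝ => x * |x| ^ (p - 2) :=
  continuous_id.mul (continuous_abs.rpow_const fun _ => Or.inr (by linarith))

lemma cont_abs_rpow {q : ℝ} (hq : 0 ≤ q) : Continuous fun x : ℝ => |x| ^ q :=
  continuous_abs.rpow_const fun _ => Or.inr hq

lemma meas_v (hXm : AEStronglyMeasurable X μ) (hYm : AEStronglyMeasurable Y μ) (s : ℝ) :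
    AEStronglyMeasurable (fun ω => X ω + s * Y ω) μ :=
  hXm.add (hYm.const_mul s)

lemma meas_F (hp : 2 ≤ p) (hXm : AEStronglyMeasurable X μ) (hYm : AEStronglyMeasurable Y μ)
    (s : ℝ) : AEStronglyMeasurable (fun ω => |X ω + s * Y ω| ^ p) μ :=
  (cont_abs_rpow (by linarith : (0:ℝ) ≤ p)).comp_aestronglyMeasurable (meas_v hXm hYm s)

lemma meas_F1 (hp : 2 ≤ p) (hXm : AEStronglyMeasurable X μ) (hYm : AEStronglyMeasurable Y μ)
    (s : ℝ) :
    AEStronglyMeasurable (fun ω => p * ((X ω + s * Y ω) * |X ω + s * Y ω| ^ (p - 2)) * Y ω) μ :=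
  (((cont_chi hp).comp_aestronglyMeasurable (meas_v hXm hYm s)).const_mul p).mul hYm

lemma meas_F2 (hp : 2 ≤ p) (hXm : AEStronglyMeasurable X μ) (hYm : AEStronglyMeasurable Y μ)
    (s : ℝ) :
    AEStronglyMeasurable
      (fun ω => p * ((p - 1) * |X ω + s * Y ω| ^ (p - 2) * Y ω) * Y ω) μ :=
  ((((cont_abs_rpow (by linarith : (0:ℝ) ≤ p - 2)).comp_aestronglyMeasurable
      (meas_v hXm hYm s)).const_mul (p - 1)).mul hYm |>.const_mul p).mul hYm

/-- the dominating function -/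
lemma int_dom (hp : 2 ≤ p)
    (hXm : AEStronglyMeasurable X μ) (hYm : AEStronglyMeasurable Y μ)
    (hXi : MeasureTheory.Integrable (fun ω => |X ω| ^ p) μ)
    (hYi : MeasureTheory.Integrable (fun ω => |Y ω| ^ p) μ) (T : ℝ) (hT : 0 ≤ T) :
    MeasureTheory.Integrable (fun ω => (|X ω| + T * |Y ω|) ^ p) μ := by
  have hmeas : AEStronglyMeasurable (fun ω => (|X ω| + T * |Y ω|) ^ p) μ :=
    (cont_abs_rpow (by linarith : (0:ℝ) ≤ p)).comp_aestronglyMeasurable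
      (((continuous_abs.comp_aestronglyMeasurable hXm).add ((continuous_abs.comp_aestronglyMeasurable hYm).const_mul T)))
      |>.congr (by
        filter_upwards with ω
        show |(|X ω| + T * |Y ω|)| ^ p = (|X ω| + T * |Y ω|) ^ p
        rw [abs_of_nonneg (by positivity : (0:ℝ) ≤ |X ω| + T * |Y ω|)])
  refine MeasureTheory.Integrable.mono'
    ((hXi.const_mul (2 ^ p)).add (hYi.const_mul (2 ^ p * T ^ p))) hmeas ?_
  filter_upwards with ω
  have h1 : ‖(|X ω| + T * |Y ω|) ^ p‖ = (|X ω| + T * |Y ω|) ^ p := by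
    rw [Real.norm_eq_abs, abs_of_nonneg (Real.rpow_nonneg (by positivity) p)]
  rw [h1]
  calc (|X ω| + T * |Y ω|) ^ p ≤ 2 ^ p * (|X ω| ^ p + (T * |Y ω|) ^ p) :=
        add_rpow_le (by linarith) (abs_nonneg _) (by positivity)
    _ = 2 ^ p * |X ω| ^ p + 2 ^ p * T ^ p * |Y ω| ^ p := by
        rw [Real.mul_rpow hT (abs_nonneg _)]; ring

/-- integrability of `|X + tY|^p` -/
lemma int_F (hp : 2 ≤ p)
    (hXm : AEStronglyMeasurable X μ) (hYm : AEStronglyMeasurable Y μ)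
    (hXi : MeasureTheory.Integrable (fun ω => |X ω| ^ p) μ)
    (hYi : MeasureTheory.Integrable (fun ω => |Y ω| ^ p) μ) (t : ℝ) :
    MeasureTheory.Integrable (fun ω => |X ω + t * Y ω| ^ p) μ := by
  refine MeasureTheory.Integrable.mono'
    (int_dom hp hXm hYm hXi hYi |t| (abs_nonneg t)) (meas_F hp hXm hYm t) ?_
  filter_upwards with ω
  rw [Real.norm_eq_abs, abs_of_nonneg (Real.rpow_nonneg (abs_nonneg _) p)]
  refine Real.rpow_le_rpow (abs_nonneg _) ?_ (by linarith)
  calc |X ω + t * Y ω| ≤ |X ω| + |t * Y ω| := abs_add_le _ _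
    _ = |X ω| + |t| * |Y ω| := by rw [abs_mul]


lemma absT {t s : ℝ} (hs : s ∈ Metric.ball t 1) : |s| ≤ |t| + 1 := by
  have h1 : |s - t| < 1 := by simpa [Real.dist_eq] using hs
  calc |s| = |s - t + t| := by ring_nf
    _ ≤ |s - t| + |t| := abs_add_le _ _
    _ ≤ |t| + 1 := by linarith

lemma abs_v_le {X Y : Ω → ℝ} (T : ℝ) {s : ℝ} (hsT : |s| ≤ T) (ω : Ω) :
    |X ω + s * Y ω| ≤ |X ω| + T * |Y ω| := by
  calc |X ω + s * Y ω| ≤ |X ω| + |s * Y ω| := abs_add_le _ _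
    _ = |X ω| + |s| * |Y ω| := by rw [abs_mul]
    _ ≤ |X ω| + T * |Y ω| := by
        have := abs_nonneg (Y ω)
        nlinarith

lemma hasDerivAt_g (hp : 2 ≤ p)
    (hXm : AEStronglyMeasurable X μ) (hYm : AEStronglyMeasurable Y μ)
    (hXi : MeasureTheory.Integrable (fun ω => |X ω| ^ p) μ)
    (hYi : MeasureTheory.Integrable (fun ω => |Y ω| ^ p) μ) (t : ℝ) :
    MeasureTheory.Integrable
        (fun ω => p * ((X ω + t * Y ω) * |X ω + t * Y ω| ^ (p - 2)) * Y ω) μ ∧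
      HasDerivAt (fun s => ∫ ω, |X ω + s * Y ω| ^ p ∂μ)
        (∫ ω, p * ((X ω + t * Y ω) * |X ω + t * Y ω| ^ (p - 2)) * Y ω ∂μ) t := by
  have hp0 : (0:ℝ) < p := by linarith
  set T := |t| + 1 with hT
  have hT0 : (0:ℝ) ≤ T := by positivity
  refine hasDerivAt_integral_of_dominated_loc_of_deriv_le
    (F' := fun s ω => p * ((X ω + s * Y ω) * |X ω + s * Y ω| ^ (p - 2)) * Y ω) (Metric.ball_mem_nhds t one_pos)
    (Filter.Eventually.of_forall fun s => meas_F hp hXm hYm s)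
    (int_F hp hXm hYm hXi hYi t) (meas_F1 hp hXm hYm t)
    (Filter.Eventually.of_forall fun ω => fun s hs => ?_)
    (((int_dom hp hXm hYm hXi hYi T hT0).add hYi).const_mul p)
    (Filter.Eventually.of_forall fun ω => fun s hs => ?_)
  · -- bound
    set v := X ω + s * Y ω with hv
    have h1 : ‖p * (v * |v| ^ (p - 2)) * Y ω‖ = p * (|v| ^ (p - 1) * |Y ω|) := by
      rw [Real.norm_eq_abs, abs_mul, abs_mul, abs_of_pos hp0, abs_mul_abs_rpow hp, mul_assoc]
    rw [h1]
    refine mul_le_mul_of_nonneg_left ?_ (le_of_lt hp0)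
    have h2 : |v| ^ (p - 1) ≤ (|X ω| + T * |Y ω|) ^ (p - 1) :=
      Real.rpow_le_rpow (abs_nonneg _) (abs_v_le T (absT hs) ω) (by linarith)
    have h3 : (|X ω| + T * |Y ω|) ^ (p - 1) * |Y ω| ^ (1:ℝ)
        ≤ (|X ω| + T * |Y ω|) ^ (p - 1 + 1) + |Y ω| ^ (p - 1 + 1) :=
      young_max (by linarith) (by norm_num) (by intro h; nlinarith) (by positivity) (abs_nonneg _)
    rw [Real.rpow_one] at h3
    have h4 : p - 1 + 1 = p := by ring
    rw [h4] at h3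
    calc |v| ^ (p - 1) * |Y ω| ≤ (|X ω| + T * |Y ω|) ^ (p - 1) * |Y ω| :=
          mul_le_mul_of_nonneg_right h2 (abs_nonneg _)
      _ ≤ (|X ω| + T * |Y ω|) ^ p + |Y ω| ^ p := h3
  · -- differentiability
    have hlin : HasDerivAt (fun s : ℝ => X ω + s * Y ω) (Y ω) s :=
      (hasDerivAt_mul_const (Y ω)).const_add (X ω)
    exact (hasDerivAt_abs_rpow hp (X ω + s * Y ω)).comp s hlin

lemma hasDerivAt_g' (hp : 2 ≤ p)
    (hXm : AEStronglyMeasurable X μ) (hYm : AEStronglyMeasurable Y μ)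
    (hXi : MeasureTheory.Integrable (fun ω => |X ω| ^ p) μ)
    (hYi : MeasureTheory.Integrable (fun ω => |Y ω| ^ p) μ) (t : ℝ) :
    MeasureTheory.Integrable
        (fun ω => p * ((p - 1) * |X ω + t * Y ω| ^ (p - 2) * Y ω) * Y ω) μ ∧
      HasDerivAt
        (fun s => ∫ ω, p * ((X ω + s * Y ω) * |X ω + s * Y ω| ^ (p - 2)) * Y ω ∂μ)
        (∫ ω, p * ((p - 1) * |X ω + t * Y ω| ^ (p - 2) * Y ω) * Y ω ∂μ) t := by
  have hp0 : (0:ℝ) < p := by linarith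
  have hp1 : (0:ℝ) ≤ p - 1 := by linarith
  set T := |t| + 1 with hT
  have hT0 : (0:ℝ) ≤ T := by positivity
  refine hasDerivAt_integral_of_dominated_loc_of_deriv_le
    (F' := fun s ω => p * ((p - 1) * |X ω + s * Y ω| ^ (p - 2) * Y ω) * Y ω) (Metric.ball_mem_nhds t one_pos)
    (Filter.Eventually.of_forall fun s => meas_F1 hp hXm hYm s)
    (hasDerivAt_g hp hXm hYm hXi hYi t).1 (meas_F2 hp hXm hYm t)
    (Filter.Eventually.of_forall fun ω => fun s hs => ?_)
    ((((int_dom hp hXm hYm hXi hYi T hT0).add hYi).const_mul (p - 1)).const_mul p)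
    (Filter.Eventually.of_forall fun ω => fun s hs => ?_)
  · -- bound
    set v := X ω + s * Y ω with hv
    have h1 : ‖p * ((p - 1) * |v| ^ (p - 2) * Y ω) * Y ω‖
        = p * ((p - 1) * (|v| ^ (p - 2) * (|Y ω| * |Y ω|))) := by
      rw [Real.norm_eq_abs, abs_mul, abs_mul, abs_mul, abs_mul, abs_of_pos hp0,
        abs_of_nonneg hp1, abs_of_nonneg (Real.rpow_nonneg (abs_nonneg v) _)]
      ring
    rw [h1]
    refine mul_le_mul_of_nonneg_left ?_ (le_of_lt hp0)
    refine mul_le_mul_of_nonneg_left ?_ hp1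
    have h2 : |v| ^ (p - 2) ≤ (|X ω| + T * |Y ω|) ^ (p - 2) :=
      Real.rpow_le_rpow (abs_nonneg _) (abs_v_le T (absT hs) ω) (by linarith)
    have h3 : (|X ω| + T * |Y ω|) ^ (p - 2) * |Y ω| ^ (2:ℝ)
        ≤ (|X ω| + T * |Y ω|) ^ (p - 2 + 2) + |Y ω| ^ (p - 2 + 2) :=
      young_max (by linarith) (by norm_num) (by intro h; nlinarith) (by positivity) (abs_nonneg _)
    have h5 : |Y ω| ^ (2:ℝ) = |Y ω| * |Y ω| := by
      rw [show (2:ℝ) = ((2:ℕ):ℝ) by norm_num, Real.rpow_natCast, pow_two]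
    have h4 : p - 2 + 2 = p := by ring
    rw [h4, h5] at h3
    calc |v| ^ (p - 2) * (|Y ω| * |Y ω|)
        ≤ (|X ω| + T * |Y ω|) ^ (p - 2) * (|Y ω| * |Y ω|) :=
          mul_le_mul_of_nonneg_right h2 (by positivity)
      _ ≤ (|X ω| + T * |Y ω|) ^ p + |Y ω| ^ p := h3
  · -- differentiability
    have hlin : HasDerivAt (fun s : ℝ => X ω + s * Y ω) (Y ω) s :=
      (hasDerivAt_mul_const (Y ω)).const_add (X ω)
    have hchi : HasDerivAt (fun s : ℝ => (X ω + s * Y ω) * |X ω + s * Y ω| ^ (p - 2))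
        ((p - 1) * |X ω + s * Y ω| ^ (p - 2) * Y ω) s :=
      by have := (hasDerivAt_chi hp (X ω + s * Y ω)).comp s hlin; exact this
    exact (hchi.const_mul p).mul_const (Y ω)


open MeasureTheory in
lemma g2_le (hp : 2 ≤ p)
    (hXp : MemLp X (ENNReal.ofReal p) μ) (hYp : MemLp Y (ENNReal.ofReal p) μ) (t : ℝ) :
    ∫ ω, p * ((p - 1) * |X ω + t * Y ω| ^ (p - 2) * Y ω) * Y ω ∂μ
      ≤ p * (p - 1) *
        ((∫ ω, |X ω + t * Y ω| ^ p ∂μ) ^ ((p - 2) / p) * (∫ ω, |Y ω| ^ p ∂μ) ^ (2 / p)) := by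
  have hp0 : (0:ℝ) < p := by linarith
  have hv : MemLp (fun ω => X ω + t * Y ω) (ENNReal.ofReal p) μ := by
    have := hXp.add (hYp.const_mul t)
    exact this
  have hstep : ∫ ω, p * ((p - 1) * |X ω + t * Y ω| ^ (p - 2) * Y ω) * Y ω ∂μ
      = p * (p - 1) * ∫ ω, |X ω + t * Y ω| ^ (p - 2) * |Y ω| ^ (2:ℝ) ∂μ := by
    rw [← MeasureTheory.integral_const_mul]
    refine integral_congr_ae (Filter.Eventually.of_forall fun ω => ?_)
    show p * ((p - 1) * |X ω + t * Y ω| ^ (p - 2) * Y ω) * Y ω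
      = p * (p - 1) * (|X ω + t * Y ω| ^ (p - 2) * |Y ω| ^ (2:ℝ))
    have h2 : |Y ω| ^ (2:ℝ) = Y ω * Y ω := by
      rw [show (2:ℝ) = ((2:ℕ):ℝ) by norm_num, Real.rpow_natCast, pow_two, abs_mul_abs_self]
    rw [h2]; ring
  rw [hstep]
  refine mul_le_mul_of_nonneg_left ?_ (by nlinarith)
  rcases eq_or_lt_of_le hp with hp2 | hp2
  · -- p = 2
    have h1 : ∀ ω, |X ω + t * Y ω| ^ (p - 2) * |Y ω| ^ (2:ℝ) = |Y ω| ^ p := by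
      intro ω
      rw [← hp2]
      norm_num
    have h2 : (∫ ω, |X ω + t * Y ω| ^ p ∂μ) ^ ((p - 2) / p) = 1 := by
      rw [← hp2]; norm_num
    have h3 : ∫ ω, |X ω + t * Y ω| ^ (p - 2) * |Y ω| ^ (2:ℝ) ∂μ = ∫ ω, |Y ω| ^ p ∂μ :=
      integral_congr_ae (Filter.Eventually.of_forall h1)
    have h4 : (∫ ω, |Y ω| ^ p ∂μ) ^ (2 / p) = ∫ ω, |Y ω| ^ p ∂μ := by rw [← hp2]; norm_num
    rw [h2, one_mul, h3, h4]
  · -- p > 2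
    have hpq : Real.HolderConjugate (p / (p - 2)) (p / 2) := by
      refine Real.holderConjugate_iff.2 ⟨?_, ?_⟩
      · rw [lt_div_iff₀ (by linarith)]; linarith
      · field_simp; ring
    have hf : MemLp (fun ω => |X ω + t * Y ω| ^ (p - 2)) (ENNReal.ofReal (p / (p - 2))) μ := by
      have h := hv.norm_rpow_div (ENNReal.ofReal (p - 2))
      rw [ENNReal.toReal_ofReal (by linarith)] at h
      rw [ENNReal.ofReal_div_of_pos (by linarith)]
      simpa [Real.norm_eq_abs] using h
    have hg : MemLp (fun ω => |Y ω| ^ (2:ℝ)) (ENNReal.ofReal (p / 2)) μ := by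
      have h := hYp.norm_rpow_div (ENNReal.ofReal 2)
      rw [ENNReal.toReal_ofReal (by norm_num)] at h
      rw [ENNReal.ofReal_div_of_pos (by norm_num)]
      simpa [Real.norm_eq_abs] using h
    have hH := integral_mul_le_Lp_mul_Lq_of_nonneg hpq
      (Filter.Eventually.of_forall fun ω => Real.rpow_nonneg (abs_nonneg _) _)
      (Filter.Eventually.of_forall fun ω => Real.rpow_nonneg (abs_nonneg _) _) hf hg
    have e1 : ∫ ω, (|X ω + t * Y ω| ^ (p - 2)) ^ (p / (p - 2)) ∂μ
        = ∫ ω, |X ω + t * Y ω| ^ p ∂μ := by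
      refine integral_congr_ae (Filter.Eventually.of_forall fun ω => ?_)
      show (|X ω + t * Y ω| ^ (p - 2)) ^ (p / (p - 2)) = |X ω + t * Y ω| ^ p
      rw [← Real.rpow_mul (abs_nonneg _)]
      congr 1
      rw [mul_div_assoc', mul_comm, mul_div_assoc]
      rw [div_self (by linarith : p - 2 ≠ 0), mul_one]
    have e2 : ∫ ω, (|Y ω| ^ (2:ℝ)) ^ (p / 2) ∂μ = ∫ ω, |Y ω| ^ p ∂μ := by
      refine integral_congr_ae (Filter.Eventually.of_forall fun ω => ?_)
      show (|Y ω| ^ (2:ℝ)) ^ (p / 2) = |Y ω| ^ p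
      rw [← Real.rpow_mul (abs_nonneg _)]
      congr 1
      field_simp
    rw [e1, e2, one_div_div, one_div_div] at hH
    exact hH


open MeasureTheory in
lemma rio_step [IsProbabilityMeasure μ] {m : MeasurableSpace Ω} (hm : m ≤ m0)
    (hp : 2 ≤ p)
    (hXsm : StronglyMeasurable[m] X)
    (hXp : MemLp X (ENNReal.ofReal p) μ) (hYp : MemLp Y (ENNReal.ofReal p) μ)
    (hY0 : μ[Y|m] =ᵐ[μ] 0) :
    (∫ ω, |X ω + Y ω| ^ p ∂μ) ^ (2 / p)
      ≤ (∫ ω, |X ω| ^ p ∂μ) ^ (2 / p) + (p - 1) * (∫ ω, |Y ω| ^ p ∂μ) ^ (2 / p) := by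
  have hp0 : (0:ℝ) < p := by linarith
  have hXm : AEStronglyMeasurable[m0] X μ := hXp.1
  have hYm : AEStronglyMeasurable[m0] Y μ := hYp.1
  have hofp : (ENNReal.ofReal p) ≠ 0 := by
    simp only [ne_eq, ENNReal.ofReal_eq_zero, not_le]; linarith
  have hXi : Integrable (fun ω => |X ω| ^ p) μ := by
    have := hXp.integrable_norm_rpow hofp ENNReal.ofReal_ne_top
    simpa [ENNReal.toReal_ofReal hp0.le, Real.norm_eq_abs] using this
  have hYi : Integrable (fun ω => |Y ω| ^ p) μ := by
    have := hYp.integrable_norm_rpow hofp ENNReal.ofReal_ne_top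
    simpa [ENNReal.toReal_ofReal hp0.le, Real.norm_eq_abs] using this
  set g : ℝ → ℝ := fun s => ∫ ω, |X ω + s * Y ω| ^ p ∂μ with hgdef
  set g1 : ℝ → ℝ :=
    fun t => ∫ ω, p * ((X ω + t * Y ω) * |X ω + t * Y ω| ^ (p - 2)) * Y ω ∂μ with hg1def
  set g2 : ℝ → ℝ :=
    fun t => ∫ ω, p * ((p - 1) * |X ω + t * Y ω| ^ (p - 2) * Y ω) * Y ω ∂μ with hg2def
  set B : ℝ := (∫ ω, |Y ω| ^ p ∂μ) ^ (2 / p) with hBdef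
  have hInn : 0 ≤ ∫ ω, |Y ω| ^ p ∂μ :=
    integral_nonneg fun ω => Real.rpow_nonneg (abs_nonneg _) _
  have hBnn : 0 ≤ B := Real.rpow_nonneg hInn _
  have hgd : ∀ t, HasDerivAt g (g1 t) t := fun t => (hasDerivAt_g hp hXm hYm hXi hYi t).2
  have hg1d : ∀ t, HasDerivAt g1 (g2 t) t := fun t => (hasDerivAt_g' hp hXm hYm hXi hYi t).2
  have hgnn : ∀ t, 0 ≤ g t := fun t =>
    integral_nonneg fun ω => Real.rpow_nonneg (abs_nonneg _) _
  have hg0 : g 0 = ∫ ω, |X ω| ^ p ∂μ := by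
    refine integral_congr_ae (Filter.Eventually.of_forall fun ω => ?_)
    norm_num
  have hgone : g 1 = ∫ ω, |X ω + Y ω| ^ p ∂μ := by
    refine integral_congr_ae (Filter.Eventually.of_forall fun ω => ?_)
    norm_num
  -- orthogonality : g1 0 = 0
  haveI : SigmaFinite (μ.trim hm) := inferInstance
  have hg10 : g1 0 = 0 := by
    set φ : Ω → ℝ := fun ω => p * (X ω * |X ω| ^ (p - 2)) with hφdef
    have hsimp : ∀ ω : Ω, X ω + 0 * Y ω = X ω := fun ω => by ring
    have hφsm : StronglyMeasurable[m] φ :=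
      ((cont_chi hp).comp_stronglyMeasurable hXsm).const_mul p
    have hint : Integrable (φ * Y) μ := by
      have h := (hasDerivAt_g hp hXm hYm hXi hYi 0).1
      refine h.congr (Filter.Eventually.of_forall fun ω => ?_)
      show p * ((X ω + 0 * Y ω) * |X ω + 0 * Y ω| ^ (p - 2)) * Y ω = (φ * Y) ω
      rw [hsimp ω]
      simp [hφdef]
    have hYint : Integrable Y μ :=
      hYp.integrable (by simpa using ENNReal.one_le_ofReal.2 (by linarith))
    have hpull := condExp_mul_of_stronglyMeasurable_left hφsm hint hYint
    have hzero : μ[φ * Y|m] =ᵐ[μ] 0 := by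
      refine hpull.trans ?_
      filter_upwards [hY0] with ω hω
      simp only [Pi.mul_apply, hω, Pi.zero_apply, mul_zero]
    have hI0 : ∫ ω, (φ * Y) ω ∂μ = 0 := by
      rw [← integral_condExp hm, integral_congr_ae hzero]
      simp
    calc g1 0 = ∫ ω, (φ * Y) ω ∂μ := by
          refine integral_congr_ae (Filter.Eventually.of_forall fun ω => ?_)
          show p * ((X ω + 0 * Y ω) * |X ω + 0 * Y ω| ^ (p - 2)) * Y ω = (φ * Y) ω
          rw [hsimp ω]
          simp [hφdef]
      _ = 0 := hI0
  by_cases hdeg : ∃ t ∈ Set.Icc (0:ℝ) 1, g t = 0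
  · -- degenerate case : X = -t₀ Y a.e.
    obtain ⟨t₀, ht₀, hgt₀⟩ := hdeg
    have hae : ∀ᵐ ω ∂μ, X ω + t₀ * Y ω = 0 := by
      have h1 := (integral_eq_zero_iff_of_nonneg_ae
        (Filter.Eventually.of_forall fun ω => Real.rpow_nonneg (abs_nonneg _) _)
        (int_F hp hXm hYm hXi hYi t₀)).1 hgt₀
      filter_upwards [h1] with ω hω
      have hω' : |X ω + t₀ * Y ω| ^ p = 0 := hω
      have := (Real.rpow_eq_zero_iff_of_nonneg (abs_nonneg _)).1 hω'
      exact abs_eq_zero.1 this.1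
    set I := ∫ ω, |Y ω| ^ p ∂μ with hIdef
    have e1 : ∫ ω, |X ω + Y ω| ^ p ∂μ = |1 - t₀| ^ p * I := by
      rw [← MeasureTheory.integral_const_mul]
      refine integral_congr_ae ?_
      filter_upwards [hae] with ω hω
      have h : X ω + Y ω = (1 - t₀) * Y ω := by linarith
      rw [h, abs_mul, Real.mul_rpow (abs_nonneg _) (abs_nonneg _)]
    have e0 : ∫ ω, |X ω| ^ p ∂μ = |t₀| ^ p * I := by
      rw [← MeasureTheory.integral_const_mul]
      refine integral_congr_ae ?_
      filter_upwards [hae] with ω hω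
      have h : X ω = -t₀ * Y ω := by linarith
      rw [h, abs_mul, Real.mul_rpow (abs_nonneg _) (abs_nonneg _), abs_neg]
    rw [e1, e0]
    rw [Real.mul_rpow (Real.rpow_nonneg (abs_nonneg _) p) hInn,
      Real.mul_rpow (Real.rpow_nonneg (abs_nonneg _) p) hInn,
      ← Real.rpow_mul (abs_nonneg _), ← Real.rpow_mul (abs_nonneg _)]
    have hexp : p * (2 / p) = 2 := by field_simp
    rw [hexp]
    have h2 : ∀ x : ℝ, |x| ^ (2:ℝ) = x ^ 2 := fun x => by
      rw [show (2:ℝ) = ((2:ℕ):ℝ) by norm_num, Real.rpow_natCast, sq_abs]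
    rw [h2, h2]
    have hJ : 0 ≤ I ^ (2 / p) := Real.rpow_nonneg hInn _
    nlinarith [mul_nonneg (show (0:ℝ) ≤ p - 2 + 2 * t₀ by nlinarith [ht₀.1, ht₀.2])
      hJ, ht₀.1, ht₀.2]
  · -- nondegenerate case
    push_neg at hdeg
    have hgpos : ∀ t ∈ Set.Icc (0:ℝ) 1, 0 < g t := fun t ht =>
      lt_of_le_of_ne (hgnn t) (Ne.symm (hdeg t ht))
    set f : ℝ → ℝ := fun s => g s ^ (2 / p) with hfdef
    set f1 : ℝ → ℝ := fun t => 2 / p * (g t ^ (2 / p - 1) * g1 t) with hf1def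
    have hfd : ∀ t ∈ Set.Icc (0:ℝ) 1, HasDerivAt f (f1 t) t := by
      intro t ht
      have h := (Real.hasDerivAt_rpow_const (p := 2 / p)
        (Or.inl (hgpos t ht).ne')).comp t (hgd t)
      refine h.congr_deriv ?_
      simp only [hf1def]
      ring
    have hf1d : ∀ t ∈ Set.Icc (0:ℝ) 1, HasDerivAt f1
        (2 / p * ((2 / p - 1) * g t ^ (2 / p - 1 - 1) * g1 t * g1 t
          + g t ^ (2 / p - 1) * g2 t)) t := by
      intro t ht
      have hu : HasDerivAt (fun s => g s ^ (2 / p - 1))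
          ((2 / p - 1) * g t ^ (2 / p - 1 - 1) * g1 t) t :=
        (Real.hasDerivAt_rpow_const (p := 2 / p - 1)
          (Or.inl (hgpos t ht).ne')).comp t (hgd t)
      exact (hu.mul (hg1d t)).const_mul (2 / p)
    have hf2bound : ∀ t ∈ Set.Icc (0:ℝ) 1,
        2 / p * ((2 / p - 1) * g t ^ (2 / p - 1 - 1) * g1 t * g1 t
          + g t ^ (2 / p - 1) * g2 t) ≤ 2 * (p - 1) * B := by
      intro t ht
      have h1 : 2 / p - 1 ≤ 0 := by
        have : 2 / p ≤ 1 := (div_le_one hp0).2 (by linarith)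
        linarith
      have hA : (2 / p - 1) * g t ^ (2 / p - 1 - 1) * g1 t * g1 t ≤ 0 := by
        have h2 : (0:ℝ) ≤ g t ^ (2 / p - 1 - 1) * (g1 t * g1 t) :=
          mul_nonneg (Real.rpow_nonneg (hgnn t) _) (mul_self_nonneg _)
        nlinarith
      have hC : g t ^ (2 / p - 1) * g2 t ≤ p * (p - 1) * B := by
        have hle := g2_le hp hXp hYp t
        have h3 : g t ^ (2 / p - 1) * g2 t
            ≤ g t ^ (2 / p - 1) * (p * (p - 1) * (g t ^ ((p - 2) / p) * B)) :=
          mul_le_mul_of_nonneg_left hle (Real.rpow_nonneg (hgnn t) _)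
        have h4 : g t ^ (2 / p - 1) * (p * (p - 1) * (g t ^ ((p - 2) / p) * B))
            = p * (p - 1) * B * (g t ^ (2 / p - 1) * g t ^ ((p - 2) / p)) := by ring
        have h5 : g t ^ (2 / p - 1) * g t ^ ((p - 2) / p) = 1 := by
          rw [← Real.rpow_add (hgpos t ht)]
          have : 2 / p - 1 + (p - 2) / p = 0 := by field_simp; ring
          rw [this, Real.rpow_zero]
        rw [h4, h5, mul_one] at h3
        exact h3
      have h6 : 2 / p * (p * (p - 1) * B) = 2 * (p - 1) * B := by
        field_simp
      calc 2 / p * ((2 / p - 1) * g t ^ (2 / p - 1 - 1) * g1 t * g1 t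
            + g t ^ (2 / p - 1) * g2 t)
          ≤ 2 / p * (p * (p - 1) * B) := by
            refine mul_le_mul_of_nonneg_left ?_ (by positivity)
            linarith
        _ = 2 * (p - 1) * B := h6
    have hf10 : f1 0 = 0 := by
      simp only [hf1def, hg10, mul_zero]
    -- first monotonicity : f1 t ≤ 2 (p-1) B t on [0,1]
    have hmono1 : ∀ t ∈ Set.Icc (0:ℝ) 1, f1 t ≤ 2 * (p - 1) * B * t := by
      have hlin : ∀ t : ℝ, HasDerivAt (fun x : ℝ => 2 * (p - 1) * B * x)
          (2 * (p - 1) * B) t := by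
        intro t
        simpa using (hasDerivAt_id t).const_mul (2 * (p - 1) * B)
      have hq : MonotoneOn (fun t => 2 * (p - 1) * B * t - f1 t) (Set.Icc 0 1) := by
        refine monotoneOn_of_deriv_nonneg (convex_Icc 0 1) ?_ ?_ ?_
        · intro t ht
          exact ((hlin t).sub (hf1d t ht)).continuousAt.continuousWithinAt
        · intro t ht
          rw [interior_Icc] at ht
          exact ((hlin t).sub
            (hf1d t (Set.Ioo_subset_Icc_self ht))).differentiableAt.differentiableWithinAt
        · intro t ht
          rw [interior_Icc] at ht
          have hder : HasDerivAt (fun t => 2 * (p - 1) * B * t - f1 t) _ t :=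
            (hlin t).sub (hf1d t (Set.Ioo_subset_Icc_self ht))
          rw [hder.deriv]
          have := hf2bound t (Set.Ioo_subset_Icc_self ht)
          linarith
      intro t ht
      have h0 : (0:ℝ) ∈ Set.Icc (0:ℝ) 1 := Set.mem_Icc.2 (by norm_num)
      have := hq h0 ht ht.1
      simp only [mul_zero, hf10, sub_zero, zero_sub] at this
      linarith
    -- second monotonicity : f 1 ≤ f 0 + (p-1) B
    have hmono2 : f 1 ≤ f 0 + (p - 1) * B := by
      have hlin2 : ∀ t : ℝ, HasDerivAt (fun x : ℝ => f 0 + (p - 1) * B * x ^ 2)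
          (2 * (p - 1) * B * t) t := by
        intro t
        have h := ((hasDerivAt_pow 2 t).const_mul ((p - 1) * B)).const_add (f 0)
        refine h.congr_deriv ?_
        push_cast
        ring
      have hq : MonotoneOn (fun t => f 0 + (p - 1) * B * t ^ 2 - f t) (Set.Icc 0 1) := by
        refine monotoneOn_of_deriv_nonneg (convex_Icc 0 1) ?_ ?_ ?_
        · intro t ht
          exact ((hlin2 t).sub (hfd t ht)).continuousAt.continuousWithinAt
        · intro t ht
          rw [interior_Icc] at ht
          exact ((hlin2 t).sub
            (hfd t (Set.Ioo_subset_Icc_self ht))).differentiableAt.differentiableWithinAt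
        · intro t ht
          rw [interior_Icc] at ht
          have hder : HasDerivAt (fun t => f 0 + (p - 1) * B * t ^ 2 - f t) _ t :=
            (hlin2 t).sub (hfd t (Set.Ioo_subset_Icc_self ht))
          rw [hder.deriv]
          have := hmono1 t (Set.Ioo_subset_Icc_self ht)
          linarith
      have h0 : (0:ℝ) ∈ Set.Icc (0:ℝ) 1 := Set.mem_Icc.2 (by norm_num)
      have h1 : (1:ℝ) ∈ Set.Icc (0:ℝ) 1 := Set.mem_Icc.2 (by norm_num)
      have := hq h0 h1 (by norm_num)
      simp only [one_pow, mul_one, mul_zero] at this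
      nlinarith [this]
    have hfin : (g 1) ^ (2 / p) ≤ (g 0) ^ (2 / p) + (p - 1) * B := hmono2
    rw [hgone, hg0] at hfin
    exact hfin

end Deriv

end RioAux

/-- For a martingale difference sequence `ξ 1, …, ξ n` in `L^p`, `p ≥ 2`,
and deterministic reals `b 1, …, b n` with `∑ b i ^ 2 = 1`,
`|∑ b i ξ i|_p ≤ (p-1) · sup_i |ξ i|_p`. -/
theorem martingale_transform_deterministic_bound
    {Ω : Type*} {m0 : MeasurableSpace Ω} (μ : Measure Ω) [IsProbabilityMeasure μ]
    (ℱ : ℕ → MeasurableSpace Ω) (hℱmono : Monotone ℱ) (hℱle : ∀ i, ℱ i ≤ m0)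
    (ξ : ℕ → Ω → ℝ)
    (hadapted : ∀ i, StronglyMeasurable[ℱ i] (ξ i))
    (hmds : ∀ i, 1 ≤ i → μ[ξ i | ℱ (i - 1)] =ᵐ[μ] 0)
    (p : ℝ) (hp : 2 ≤ p)
    (n : ℕ) (hn : 1 ≤ n)
    (hLp : ∀ i, MemLp (ξ i) (ENNReal.ofReal p) μ)
    (b : ℕ → ℝ) (hb : ∑ i ∈ Icc 1 n, (b i) ^ 2 = 1) :
    (∫ x, |∑ i ∈ Icc 1 n, b i * ξ i x| ^ p ∂μ) ^ (1 / p)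
      ≤ (p - 1) *
        (Icc 1 n).sup' (Finset.nonempty_Icc.2 hn)
          (fun i => (∫ x, |ξ i x| ^ p ∂μ) ^ (1 / p)) := by

  have hp0 : (0:ℝ) < p := by linarith
  set S : ℕ → Ω → ℝ := fun k ω => ∑ i ∈ Icc 1 k, b i * ξ i ω with hSdef
  have hSsm : ∀ k, StronglyMeasurable[ℱ k] (S k) := by
    intro k
    refine Finset.stronglyMeasurable_fun_sum _ fun i hi => ?_
    have hik : i ≤ k := (Finset.mem_Icc.1 hi).2
    exact (stronglyMeasurable_const.mul ((hadapted i).mono (hℱmono hik)))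
  have hSLp : ∀ k, MemLp (S k) (ENNReal.ofReal p) μ := by
    intro k
    exact memLp_finset_sum _ fun i _ => (hLp i).const_mul (b i)
  -- main induction
  have claim : ∀ k : ℕ,
      (∫ x, |S k x| ^ p ∂μ) ^ (2 / p)
        ≤ (p - 1) * ∑ i ∈ Icc 1 k, (b i) ^ 2 * (∫ x, |ξ i x| ^ p ∂μ) ^ (2 / p) := by
    intro k
    induction k with
    | zero =>
      have h0 : Icc 1 0 = (∅ : Finset ℕ) := by decide
      have hS0 : ∀ x, S 0 x = 0 := fun x => by simp [hSdef, h0]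
      have h1 : (∫ x, |S 0 x| ^ p ∂μ) = 0 := by
        have : ∀ x : Ω, |S 0 x| ^ p = 0 := fun x => by
          rw [hS0, abs_zero, Real.zero_rpow hp0.ne']
        rw [integral_congr_ae (Filter.Eventually.of_forall this)]
        simp
      rw [h1, Real.zero_rpow (by positivity : 2 / p ≠ 0), h0]
      simp
    | succ k ih =>
      have hk1 : 1 ≤ k + 1 := le_add_self
      have hsplit : ∀ x, S (k + 1) x = S k x + b (k + 1) * ξ (k + 1) x := by
        intro x
        simp only [hSdef]
        exact Finset.sum_Icc_succ_top hk1 _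
      have hY0 : μ[(fun ω => b (k + 1) * ξ (k + 1) ω) | ℱ k] =ᵐ[μ] 0 := by
        have h1 := condExp_smul (m := ℱ k) (μ := μ) (b (k + 1)) (ξ (k + 1))
        have h2 : μ[ξ (k + 1) | ℱ k] =ᵐ[μ] 0 := by
          have := hmds (k + 1) le_add_self
          simpa using this
        refine Filter.EventuallyEq.trans ?_ (h1.trans ?_)
        · rfl
        · filter_upwards [h2] with ω hω
          simp [hω]
      have hrio := RioAux.rio_step (X := S k) (Y := fun ω => b (k + 1) * ξ (k + 1) ω)
        (hℱle k) hp (hSsm k) (hSLp k) ((hLp (k + 1)).const_mul (b (k + 1))) hY0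
      have hYint : (∫ x, |b (k + 1) * ξ (k + 1) x| ^ p ∂μ)
          = |b (k + 1)| ^ p * ∫ x, |ξ (k + 1) x| ^ p ∂μ := by
        rw [← MeasureTheory.integral_const_mul]
        refine integral_congr_ae (Filter.Eventually.of_forall fun x => ?_)
        show |b (k + 1) * ξ (k + 1) x| ^ p = |b (k + 1)| ^ p * |ξ (k + 1) x| ^ p
        rw [abs_mul, Real.mul_rpow (abs_nonneg _) (abs_nonneg _)]
      have hxiInt : 0 ≤ ∫ x, |ξ (k + 1) x| ^ p ∂μ :=
        integral_nonneg fun x => Real.rpow_nonneg (abs_nonneg _) _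
      have hYpow : (∫ x, |b (k + 1) * ξ (k + 1) x| ^ p ∂μ) ^ (2 / p)
          = (b (k + 1)) ^ 2 * (∫ x, |ξ (k + 1) x| ^ p ∂μ) ^ (2 / p) := by
        rw [hYint, Real.mul_rpow (Real.rpow_nonneg (abs_nonneg _) _) hxiInt,
          ← Real.rpow_mul (abs_nonneg _)]
        have : p * (2 / p) = 2 := by field_simp
        rw [this, show (2:ℝ) = ((2:ℕ):ℝ) by norm_num, Real.rpow_natCast, sq_abs]
      have hcongr : (∫ x, |S (k + 1) x| ^ p ∂μ)
          = ∫ x, |S k x + b (k + 1) * ξ (k + 1) x| ^ p ∂μ := by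
        refine integral_congr_ae (Filter.Eventually.of_forall fun x => ?_)
        show |S (k + 1) x| ^ p = |S k x + b (k + 1) * ξ (k + 1) x| ^ p
        rw [hsplit x]
      rw [hcongr, Finset.sum_Icc_succ_top hk1]
      calc (∫ x, |S k x + b (k + 1) * ξ (k + 1) x| ^ p ∂μ) ^ (2 / p)
          ≤ (∫ x, |S k x| ^ p ∂μ) ^ (2 / p)
            + (p - 1) * (∫ x, |b (k + 1) * ξ (k + 1) x| ^ p ∂μ) ^ (2 / p) := hrio
        _ ≤ (p - 1) * ∑ i ∈ Icc 1 k, (b i) ^ 2 * (∫ x, |ξ i x| ^ p ∂μ) ^ (2 / p)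
            + (p - 1) * ((b (k + 1)) ^ 2 * (∫ x, |ξ (k + 1) x| ^ p ∂μ) ^ (2 / p)) := by
            rw [hYpow]
            linarith [ih]
        _ = (p - 1) * (∑ i ∈ Icc 1 k, (b i) ^ 2 * (∫ x, |ξ i x| ^ p ∂μ) ^ (2 / p)
            + (b (k + 1)) ^ 2 * (∫ x, |ξ (k + 1) x| ^ p ∂μ) ^ (2 / p)) := by ring
  -- final assembly
  set M : ℝ := (Icc 1 n).sup' (Finset.nonempty_Icc.2 hn)
    (fun i => (∫ x, |ξ i x| ^ p ∂μ) ^ (1 / p)) with hMdef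
  have hMn : ∀ i ∈ Icc 1 n, (∫ x, |ξ i x| ^ p ∂μ) ^ (1 / p) ≤ M :=
    fun i hi => Finset.le_sup' (fun i => (∫ x, |ξ i x| ^ p ∂μ) ^ (1 / p)) hi
  have hMnn : 0 ≤ M := by
    have hmem : n ∈ Icc 1 n := Finset.mem_Icc.2 ⟨hn, le_refl n⟩
    exact le_trans (Real.rpow_nonneg (integral_nonneg fun x =>
      Real.rpow_nonneg (abs_nonneg _) _) _) (hMn n hmem)
  have hsum : ∑ i ∈ Icc 1 n, (b i) ^ 2 * (∫ x, |ξ i x| ^ p ∂μ) ^ (2 / p)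
      ≤ M ^ (2:ℝ) := by
    calc ∑ i ∈ Icc 1 n, (b i) ^ 2 * (∫ x, |ξ i x| ^ p ∂μ) ^ (2 / p)
        ≤ ∑ i ∈ Icc 1 n, (b i) ^ 2 * M ^ (2:ℝ) := by
          refine Finset.sum_le_sum fun i hi => ?_
          refine mul_le_mul_of_nonneg_left ?_ (sq_nonneg _)
          have hInn : 0 ≤ ∫ x, |ξ i x| ^ p ∂μ :=
            integral_nonneg fun x => Real.rpow_nonneg (abs_nonneg _) _
          have h1 : (∫ x, |ξ i x| ^ p ∂μ) ^ (2 / p)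
              = ((∫ x, |ξ i x| ^ p ∂μ) ^ (1 / p)) ^ (2:ℝ) := by
            rw [← Real.rpow_mul hInn]
            congr 1
            field_simp
          rw [h1]
          exact Real.rpow_le_rpow (Real.rpow_nonneg hInn _) (hMn i hi) (by norm_num)
      _ = M ^ (2:ℝ) := by rw [← Finset.sum_mul, hb, one_mul]
  have hSn : 0 ≤ ∫ x, |S n x| ^ p ∂μ :=
    integral_nonneg fun x => Real.rpow_nonneg (abs_nonneg _) _
  have hkey : (∫ x, |S n x| ^ p ∂μ) ^ (2 / p) ≤ (p - 1) * M ^ (2:ℝ) := by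
    refine le_trans (claim n) ?_
    exact mul_le_mul_of_nonneg_left hsum (by linarith)
  -- take square roots
  have h1 : (∫ x, |S n x| ^ p ∂μ) ^ (1 / p)
      = ((∫ x, |S n x| ^ p ∂μ) ^ (2 / p)) ^ ((1:ℝ)/2) := by
    rw [← Real.rpow_mul hSn]
    congr 1
    field_simp
  have h2 : ((∫ x, |S n x| ^ p ∂μ) ^ (2 / p)) ^ ((1:ℝ)/2)
      ≤ ((p - 1) * M ^ (2:ℝ)) ^ ((1:ℝ)/2) :=
    Real.rpow_le_rpow (Real.rpow_nonneg hSn _) hkey (by norm_num)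
  have h3 : ((p - 1) * M ^ (2:ℝ)) ^ ((1:ℝ)/2) = (p - 1) ^ ((1:ℝ)/2) * M := by
    rw [Real.mul_rpow (by linarith) (Real.rpow_nonneg hMnn _),
      ← Real.rpow_mul hMnn]
    norm_num
  have h4 : (p - 1) ^ ((1:ℝ)/2) ≤ p - 1 := by
    have := Real.rpow_le_rpow_of_exponent_le (by linarith : (1:ℝ) ≤ p - 1)
      (by norm_num : (1:ℝ)/2 ≤ 1)
    rwa [Real.rpow_one] at this
  calc (∫ x, |S n x| ^ p ∂μ) ^ (1 / p)
      ≤ ((p - 1) * M ^ (2:ℝ)) ^ ((1:ℝ)/2) := by rw [h1]; exact h2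
    _ = (p - 1) ^ ((1:ℝ)/2) * M := h3
    _ ≤ (p - 1) * M := mul_le_mul_of_nonneg_right h4 hMnn
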